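/- Fix t > 0. (i) A vector v ∈ ℝ^{1,4} satisfies ⟨v, N t ε⟩ = 0 for all four sign vectors ε with ε 0 · ε 1 · ε 2 = 1 if and only if v is a scalar multiple of (-t, 0, 0, 0, √2); similarly, ⟨v, P t ε⟩ = 0 for all four sign vectors ε with ε 0 · ε 1 · ε 2 = -1 if and only if v is a scalar multiple of (-1/t, 0, 0, 0, √2). (ii) Consequently, if there exists a nonzero v ∈ ℝ^{1,4} that is Minkowski-orthogonal to all eight of these vectors, then t = 1. (This shows there is no hyperplane preserved by reflection in all eight walls bounding the end E_G except at the start of the deformation, so for t ≠ 1 the corresponding end is not Fuchsian and the convex core boundary is not totally geodesic.) -/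

import Mathlib

/-- The Minkowski inner product on `ℝ^{1,4}`, identified with `Fin 5 → ℝ`. -/
noncomputable def mink (v w : Fin 5 → ℝ) : ℝ :=
  -(v 0 * w 0) + v 1 * w 1 + v 2 * w 2 + v 3 * w 3 + v 4 * w 4

/-- The positive octet space-like vectors of the deformed 24-cell (Table 6.1). -/
noncomputable def Pvec (t : ℝ) (ε : Fin 3 → ℝ) : Fin 5 → ℝ :=
  ![Real.sqrt 2, ε 0, ε 1, ε 2, (ε 0 * ε 1 * ε 2) / t]

/-- The negative octet space-like vectors of the deformed 24-cell (Table 6.1). -/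
noncomputable def Nvec (t : ℝ) (ε : Fin 3 → ℝ) : Fin 5 → ℝ :=
  ![Real.sqrt 2, ε 0, ε 1, ε 2, -((ε 0 * ε 1 * ε 2) * t)]

/-- (i) The vectors Minkowski-orthogonal to all four even negative walls (resp. all four
odd positive walls) are exactly the multiples of `(-t,0,0,0,√2)` (resp.
`(-1/t,0,0,0,√2)`).  (ii) Hence a nonzero vector orthogonal to all eight walls bounding
the end `E_G` exists only when `t = 1`: for `t ≠ 1` the end is not Fuchsian. -/
theorem no_common_orthogonal_hyperplane (t : ℝ) (ht : 0 < t) :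
    (∀ v : Fin 5 → ℝ,
      ((∀ ε : Fin 3 → ℝ, (∀ i, ε i = -1 ∨ ε i = 1) → ε 0 * ε 1 * ε 2 = 1 →
          mink v (Nvec t ε) = 0) ↔
        ∃ c : ℝ, v = c • (![-t, 0, 0, 0, Real.sqrt 2] : Fin 5 → ℝ)) ∧
      ((∀ ε : Fin 3 → ℝ, (∀ i, ε i = -1 ∨ ε i = 1) → ε 0 * ε 1 * ε 2 = -1 →
          mink v (Pvec t ε) = 0) ↔
        ∃ c : ℝ, v = c • (![-(1 / t), 0, 0, 0, Real.sqrt 2] : Fin 5 → ℝ))) ∧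
    ((∃ v : Fin 5 → ℝ, v ≠ 0 ∧
        ∀ ε : Fin 3 → ℝ, (∀ i, ε i = -1 ∨ ε i = 1) →
          (ε 0 * ε 1 * ε 2 = 1 → mink v (Nvec t ε) = 0) ∧
          (ε 0 * ε 1 * ε 2 = -1 → mink v (Pvec t ε) = 0)) → t = 1) := by
  have hs0 : Real.sqrt 2 ≠ 0 := by positivity
  have hs2 : Real.sqrt 2 * Real.sqrt 2 = 2 := Real.mul_self_sqrt (by norm_num)
  have ht0 : t ≠ 0 := ne_of_gt ht
  have main : ∀ v : Fin 5 → ℝ,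
      ((∀ ε : Fin 3 → ℝ, (∀ i, ε i = -1 ∨ ε i = 1) → ε 0 * ε 1 * ε 2 = 1 →
          mink v (Nvec t ε) = 0) ↔
        ∃ c : ℝ, v = c • (![-t, 0, 0, 0, Real.sqrt 2] : Fin 5 → ℝ)) ∧
      ((∀ ε : Fin 3 → ℝ, (∀ i, ε i = -1 ∨ ε i = 1) → ε 0 * ε 1 * ε 2 = -1 →
          mink v (Pvec t ε) = 0) ↔
        ∃ c : ℝ, v = c • (![-(1 / t), 0, 0, 0, Real.sqrt 2] : Fin 5 → ℝ)) := by
    intro v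
    constructor
    · constructor
      · intro h
        have e1 := h ![1,1,1] (by intro i; fin_cases i <;> norm_num) (by norm_num [Matrix.cons_val_two])
        have e2 := h ![1,-1,-1] (by intro i; fin_cases i <;> norm_num) (by norm_num [Matrix.cons_val_two])
        have e3 := h ![-1,1,-1] (by intro i; fin_cases i <;> norm_num) (by norm_num [Matrix.cons_val_two])
        have e4 := h ![-1,-1,1] (by intro i; fin_cases i <;> norm_num) (by norm_num [Matrix.cons_val_two])
        simp [mink, Nvec] at e1 e2 e3 e4
        refine ⟨v 4 / Real.sqrt 2, ?_⟩
        funext i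
        fin_cases i
        · rw [show (⟨0, by omega⟩ : Fin 5) = (0 : Fin 5) from rfl]
          show v 0 = _
          simp only [Pi.smul_apply, Matrix.cons_val_zero, smul_eq_mul]
          field_simp
          linear_combination (-(1:ℝ)/4) * (e1 + e2 + e3 + e4)
        · rw [show (⟨1, by omega⟩ : Fin 5) = (1 : Fin 5) from rfl]
          show v 1 = _
          simp only [Pi.smul_apply, Matrix.cons_val_one, Matrix.head_cons, smul_eq_mul,
            Matrix.cons_val_zero, mul_zero]
          linear_combination ((1:ℝ)/4) * (e1 + e2 - e3 - e4)
        · rw [show (⟨2, by omega⟩ : Fin 5) = (2 : Fin 5) from rfl]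
          show v 2 = _
          simp only [Pi.smul_apply, Matrix.cons_val_two, Matrix.tail_cons, Matrix.head_cons,
            smul_eq_mul, mul_zero]
          linear_combination ((1:ℝ)/4) * (e1 - e2 + e3 - e4)
        · rw [show (⟨3, by omega⟩ : Fin 5) = (3 : Fin 5) from rfl]
          show v 3 = _
          simp only [Pi.smul_apply, Matrix.cons_val_three, Matrix.tail_cons, Matrix.head_cons,
            smul_eq_mul, mul_zero]
          linear_combination ((1:ℝ)/4) * (e1 - e2 - e3 + e4)
        · rw [show (⟨4, by omega⟩ : Fin 5) = (4 : Fin 5) from rfl]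
          show v 4 = _
          simp only [Pi.smul_apply, Matrix.cons_val_four, Matrix.tail_cons, Matrix.head_cons,
            smul_eq_mul]
          rw [div_mul_cancel₀ _ hs0]
      · rintro ⟨c, rfl⟩
        intro ε hε hprod
        simp only [mink, Nvec, Pi.smul_apply, Matrix.cons_val_zero, Matrix.cons_val_one,
          Matrix.head_cons, Matrix.cons_val_two, Matrix.cons_val_three, Matrix.cons_val_four,
          Matrix.tail_cons, smul_eq_mul]
        linear_combination (-(c * Real.sqrt 2 * t)) * hprod
    · constructor
      · intro h
        have e1 := h ![-1,-1,-1] (by intro i; fin_cases i <;> norm_num) (by norm_num [Matrix.cons_val_two])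
        have e2 := h ![-1,1,1] (by intro i; fin_cases i <;> norm_num) (by norm_num [Matrix.cons_val_two])
        have e3 := h ![1,-1,1] (by intro i; fin_cases i <;> norm_num) (by norm_num [Matrix.cons_val_two])
        have e4 := h ![1,1,-1] (by intro i; fin_cases i <;> norm_num) (by norm_num [Matrix.cons_val_two])
        simp [mink, Pvec] at e1 e2 e3 e4
        field_simp at e1 e2 e3 e4
        refine ⟨v 4 / Real.sqrt 2, ?_⟩
        funext i
        have hv1 : v 1 * t = 0 := by linear_combination (-(1:ℝ)/4) * (e1 + e2 - e3 - e4)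
        have hv2 : v 2 * t = 0 := by linear_combination (-(1:ℝ)/4) * (e1 - e2 + e3 - e4)
        have hv3 : v 3 * t = 0 := by linear_combination (-(1:ℝ)/4) * (e1 - e2 - e3 + e4)
        fin_cases i
        · rw [show (⟨0, by omega⟩ : Fin 5) = (0 : Fin 5) from rfl]
          show v 0 = _
          simp only [Pi.smul_apply, Matrix.cons_val_zero, smul_eq_mul]
          field_simp
          linear_combination (-(1:ℝ)/4) * (e1 + e2 + e3 + e4)
        · rw [show (⟨1, by omega⟩ : Fin 5) = (1 : Fin 5) from rfl]
          show v 1 = _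
          simp only [Pi.smul_apply, Matrix.cons_val_one, Matrix.head_cons, smul_eq_mul,
            Matrix.cons_val_zero, mul_zero]
          exact (mul_eq_zero.mp hv1).resolve_right ht0
        · rw [show (⟨2, by omega⟩ : Fin 5) = (2 : Fin 5) from rfl]
          show v 2 = _
          simp only [Pi.smul_apply, Matrix.cons_val_two, Matrix.tail_cons, Matrix.head_cons,
            smul_eq_mul, mul_zero]
          exact (mul_eq_zero.mp hv2).resolve_right ht0
        · rw [show (⟨3, by omega⟩ : Fin 5) = (3 : Fin 5) from rfl]
          show v 3 = _
          simp only [Pi.smul_apply, Matrix.cons_val_three, Matrix.tail_cons, Matrix.head_cons,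
            smul_eq_mul, mul_zero]
          exact (mul_eq_zero.mp hv3).resolve_right ht0
        · rw [show (⟨4, by omega⟩ : Fin 5) = (4 : Fin 5) from rfl]
          show v 4 = _
          simp only [Pi.smul_apply, Matrix.cons_val_four, Matrix.tail_cons, Matrix.head_cons,
            smul_eq_mul]
          rw [div_mul_cancel₀ _ hs0]
      · rintro ⟨c, rfl⟩
        intro ε hε hprod
        simp only [mink, Pvec, Pi.smul_apply, Matrix.cons_val_zero, Matrix.cons_val_one,
          Matrix.head_cons, Matrix.cons_val_two, Matrix.cons_val_three, Matrix.cons_val_four,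
          Matrix.tail_cons, smul_eq_mul]
        field_simp
        linear_combination (c * Real.sqrt 2) * hprod
  refine ⟨main, ?_⟩
  rintro ⟨v, hv, h⟩
  obtain ⟨c, hc⟩ := (main v).1.mp (fun ε hε hp => (h ε hε).1 hp)
  obtain ⟨c', hc'⟩ := (main v).2.mp (fun ε hε hp => (h ε hε).2 hp)
  have h4 : c * Real.sqrt 2 = c' * Real.sqrt 2 := by
    have a1 := congrFun hc 4
    have a2 := congrFun hc' 4
    simp only [Pi.smul_apply, Matrix.cons_val_four, Matrix.tail_cons, Matrix.head_cons,
      smul_eq_mul] at a1 a2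
    rw [← a1, ← a2]
  have hcc : c = c' := mul_right_cancel₀ hs0 h4
  have hc0 : c ≠ 0 := by
    rintro rfl
    exact hv (by rw [hc, zero_smul])
  have a1 := congrFun hc 0
  have a2 := congrFun hc' 0
  simp only [Pi.smul_apply, Matrix.cons_val_zero, smul_eq_mul] at a1 a2
  rw [← hcc] at a2
  have h0 : c * -t = c * -(1 / t) := by rw [← a1, ← a2]
  have h1 : t = 1 / t := by
    have := mul_left_cancel₀ hc0 h0
    linarith
  have h2 : (t - 1) * (t + 1) = 0 := by
    field_simp at h1
    nlinarith [h1]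
  rcases mul_eq_zero.mp h2 with h | h
  · linarith
  · linarith
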